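/- Let K be a totally complex number field of degree 2k with diagonal group \mathcal{A}_k = {diag(a_1,…,a_k) : |Πa_i|=1}. Then rh_{\mathcal{A}_k}(ψ(\mathcal{O}_K)) = 2k/|d_K|^{1/2k}. -/

import Mathlib

open NumberField MeasureTheory Matrix
open scoped Classical

/-- Squared Euclidean (Hermitian) norm of a complex vector. -/
noncomputable def vnormSq {ι : Type*} [Fintype ι] (v : ι → ℂ) : ℝ := ∑ i, ‖v i‖ ^ 2

/-- The relative canonical embedding of a totally complex number field into ℂ^k: one embedding
chosen from each complex-conjugate pair (i.e. one for each complex infinite place). -/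
noncomputable def relCanEmb (K : Type*) [Field K] [NumberField K] (x : K) :
    {w : InfinitePlace K // w.IsComplex} → ℂ :=
  fun w => w.1.embedding x

section Aux

variable (K : Type*) [Field K] [NumberField K]

/-- `relCanEmb` as a ring hom. -/
noncomputable def psiHom : K →+* ({w : InfinitePlace K // w.IsComplex} → ℂ) :=
  Pi.ringHom fun w => w.1.embedding

lemma isEmpty_real (htc : ∀ w : InfinitePlace K, w.IsComplex) :
    IsEmpty {w : InfinitePlace K // w.IsReal} :=
  ⟨fun w => (InfinitePlace.not_isReal_iff_isComplex.mpr (htc w.1)) w.2⟩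

/-- The projection from the mixed space to its complex part, as a linear equivalence,
when there are no real places. -/
noncomputable def sndEquiv (htc : ∀ w : InfinitePlace K, w.IsComplex) :
    (mixedEmbedding.mixedSpace K) ≃ₗ[ℝ] ({w : InfinitePlace K // w.IsComplex} → ℂ) where
  toFun := Prod.snd
  map_add' _ _ := rfl
  map_smul' _ _ := rfl
  invFun := fun x => (0, x)
  left_inv := fun p => by
    haveI := isEmpty_real K htc
    exact Prod.ext (funext fun w => isEmptyElim w) rfl
  right_inv := fun _ => rfl

lemma map_volume_snd (htc : ∀ w : InfinitePlace K, w.IsComplex) :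
    Measure.map Prod.snd (volume : Measure (mixedEmbedding.mixedSpace K)) = volume := by
  haveI := isEmpty_real K htc
  rw [MeasureTheory.Measure.volume_eq_prod, Measure.map_snd_prod]
  have h1 : (volume (Set.univ : Set ({w : InfinitePlace K // w.IsReal} → ℝ))) = 1 := by
    simp [volume_pi, Measure.pi_univ]
  rw [h1, one_smul]

lemma volume_image_snd (htc : ∀ w : InfinitePlace K, w.IsComplex)
    (s : Set (mixedEmbedding.mixedSpace K)) (hs : MeasurableSet s) :
    volume (Prod.snd '' s : Set ({w : InfinitePlace K // w.IsComplex} → ℂ)) = volume s := by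
  haveI := isEmpty_real K htc
  have himg : (Prod.snd '' s : Set ({w : InfinitePlace K // w.IsComplex} → ℂ))
      = (fun x => ((0 : {w : InfinitePlace K // w.IsReal} → ℝ), x)) ⁻¹' s := by
    ext x
    constructor
    · rintro ⟨p, hp, rfl⟩
      have h0 : ((0 : {w : InfinitePlace K // w.IsReal} → ℝ), p.2) = p :=
        Prod.ext (funext fun w => isEmptyElim w) rfl
      show ((0 : {w : InfinitePlace K // w.IsReal} → ℝ), p.2) ∈ s
      rw [h0]; exact hp
    · intro hx
      exact ⟨_, hx, rfl⟩
  rw [← map_volume_snd K htc, Measure.map_apply measurable_snd]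
  · congr 1
    refine Set.preimage_image_eq s fun p q h => ?_
    exact Prod.ext (funext fun w => isEmptyElim w) h
  · rw [himg]
    exact (measurable_const.prodMk measurable_id) hs

lemma span_relCanEmb_eq {ι : Type*} (β : Module.Basis ι ℤ (𝓞 K)) :
    Submodule.span ℤ (Set.range (fun i => relCanEmb K (β i : K))) =
      LinearMap.range ((psiHom K).toIntAlgHom.toLinearMap ∘ₗ
        (algebraMap (𝓞 K) K).toIntAlgHom.toLinearMap) := by
  have h : Set.range (fun i => relCanEmb K (β i : K)) =
      ⇑((psiHom K).toIntAlgHom.toLinearMap ∘ₗ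
        (algebraMap (𝓞 K) K).toIntAlgHom.toLinearMap) '' Set.range β := by
    rw [← Set.range_comp]; rfl
  rw [h, ← Submodule.map_span, β.span_eq, Submodule.map_top]

lemma volume_fd (k : ℕ)
    (htc : ∀ w : InfinitePlace K, w.IsComplex)
    (b : Module.Basis (Fin (2 * k)) ℤ (𝓞 K))
    (B : Module.Basis (Fin (2 * k)) ℝ ({w : InfinitePlace K // w.IsComplex} → ℂ))
    (hB : ∀ i, B i = relCanEmb K (b i : K)) :
    volume (ZSpan.fundamentalDomain B) =
      volume (ZSpan.fundamentalDomain (mixedEmbedding.latticeBasis K)) := by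
  set e := sndEquiv K htc with he
  set B' := (mixedEmbedding.latticeBasis K).map e with hB'def
  have hB' : ∀ i, B' i = relCanEmb K (RingOfIntegers.basis K i : K) := by
    intro i
    rw [hB'def, Module.Basis.map_apply, mixedEmbedding.latticeBasis_apply, integralBasis_apply]
    funext w
    exact mixedEmbedding.mixedEmbedding_apply_isComplex _ _ _
  have hspan : Submodule.span ℤ (Set.range B) = Submodule.span ℤ (Set.range B') := by
    have h1 : Set.range B = Set.range (fun i => relCanEmb K (b i : K)) := by
      rw [show ⇑B = fun i => relCanEmb K (b i : K) from funext hB]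
    have h2 : Set.range B' = Set.range (fun i => relCanEmb K (RingOfIntegers.basis K i : K)) := by
      rw [show ⇑B' = fun i => relCanEmb K (RingOfIntegers.basis K i : K) from funext hB']
    rw [h1, h2, span_relCanEmb_eq, span_relCanEmb_eq]
  have h1 : volume (ZSpan.fundamentalDomain B) = volume (ZSpan.fundamentalDomain B') := by
    haveI : Countable (Submodule.span ℤ (Set.range B)).toAddSubgroup :=
      inferInstanceAs (Countable (Submodule.span ℤ (Set.range B)))
    have fd1 := ZSpan.isAddFundamentalDomain' B (volume)
    have fd2 := ZSpan.isAddFundamentalDomain' B' (volume)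
    rw [← hspan] at fd2
    exact fd1.measure_eq fd2
  rw [h1, ← ZSpan.map_fundamentalDomain,
    show ⇑e '' ZSpan.fundamentalDomain (mixedEmbedding.latticeBasis K) =
      Prod.snd '' ZSpan.fundamentalDomain (mixedEmbedding.latticeBasis K) from rfl,
    volume_image_snd K htc _ (ZSpan.fundamentalDomain_measurableSet _)]

end Aux

/-- For a totally complex number field K of degree 2k and the diagonal group
𝒜_k = {diag(a₁,…,a_k) : |∏aᵢ| = 1}, the reduced Hermite invariant of ψ(𝒪_K), i.e.
inf over A ∈ 𝒜_k and nonzero x ∈ 𝒪_K of ‖A ψ(x)‖² divided by Vol(ψ(𝒪_K))^{1/k},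
equals 2k/|d_K|^{1/2k}. -/
theorem reducedHermite_psi_ringOfIntegers (K : Type*) [Field K] [NumberField K] (k : ℕ)
    (hdeg : Module.finrank ℚ K = 2 * k)
    (htc : ∀ w : InfinitePlace K, w.IsComplex)
    (b : Module.Basis (Fin (2 * k)) ℤ (𝓞 K))
    (B : Module.Basis (Fin (2 * k)) ℝ ({w : InfinitePlace K // w.IsComplex} → ℂ))
    (hB : ∀ i, B i = relCanEmb K (b i : K)) :
    sInf {r : ℝ | ∃ a : {w : InfinitePlace K // w.IsComplex} → ℂ,
          ‖∏ w, a w‖ = 1 ∧ ∃ x : 𝓞 K, x ≠ 0 ∧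
            r = vnormSq ((Matrix.diagonal a).mulVec (relCanEmb K (x : K)))} /
        ((volume (ZSpan.fundamentalDomain B)).toReal ^ ((1 : ℝ) / k))
      = 2 * k / |(NumberField.discr K : ℝ)| ^ ((1 : ℝ) / (2 * k)) := by
  classical
  haveI := isEmpty_real K htc
  -- the number of complex places is k
  have hcard : Fintype.card {w : InfinitePlace K // w.IsComplex} = k := by
    have h := InfinitePlace.card_add_two_mul_card_eq_rank K
    rw [hdeg] at h
    have h0 : NumberField.InfinitePlace.nrRealPlaces K = 0 := Fintype.card_eq_zero
    have h0' : NumberField.InfinitePlace.nrComplexPlaces K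
        = Fintype.card {w : InfinitePlace K // w.IsComplex} := rfl
    rw [h0, h0'] at h
    omega
  have hk0 : 0 < k := by
    have : 0 < Module.finrank ℚ K := Module.finrank_pos
    omega
  have hkR : (0 : ℝ) < k := by exact_mod_cast hk0
  -- the infimum equals k
  set S : Set ℝ := {r : ℝ | ∃ a : {w : InfinitePlace K // w.IsComplex} → ℂ,
          ‖∏ w, a w‖ = 1 ∧ ∃ x : 𝓞 K, x ≠ 0 ∧
            r = vnormSq ((Matrix.diagonal a).mulVec (relCanEmb K (x : K)))} with hS
  have hmem : (k : ℝ) ∈ S := by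
    refine ⟨fun _ => 1, by simp, 1, one_ne_zero, ?_⟩
    have hv : ∀ w, (Matrix.diagonal (fun _ => (1 : ℂ))).mulVec
        (relCanEmb K ((1 : 𝓞 K) : K)) w = 1 := by
      intro w
      rw [Matrix.mulVec_diagonal]
      simp [relCanEmb]
    unfold vnormSq
    rw [Finset.sum_congr rfl (fun w _ => by rw [hv w])]
    simp [hcard]
  have hlow : ∀ r ∈ S, (k : ℝ) ≤ r := by
    rintro r ⟨a, ha, x, hx, rfl⟩
    set p : {w : InfinitePlace K // w.IsComplex} → ℝ :=
      fun w => ‖(Matrix.diagonal a).mulVec (relCanEmb K (x : K)) w‖ ^ 2 with hp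
    have hp_nonneg : ∀ w, 0 ≤ p w := fun w => by positivity
    -- product of the p w is at least 1
    have hprod : 1 ≤ ∏ w, p w := by
      have hpw : ∀ w, p w = ‖a w‖ ^ 2 *
          ‖relCanEmb K (x : K) w‖ ^ 2 := by
        intro w
        rw [hp]
        simp only [Matrix.mulVec_diagonal]
        rw [norm_mul]
        ring
      rw [Finset.prod_congr rfl (fun w _ => hpw w), Finset.prod_mul_distrib]
      have h1 : ∏ w, ‖a w‖ ^ 2 = 1 := by
        rw [Finset.prod_pow, ← norm_prod, ha, one_pow]
      have h2 : ∏ w : {w : InfinitePlace K // w.IsComplex},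
          ‖relCanEmb K (x : K) w‖ ^ 2 = |Algebra.norm ℚ (x : K)| := by
        rw [← InfinitePlace.prod_eq_abs_norm (x : K)]
        rw [← Equiv.prod_comp (Equiv.subtypeUnivEquiv htc)
          (fun w => (w : InfinitePlace K) ((x : K)) ^ (InfinitePlace.mult w))]
        refine Finset.prod_congr rfl fun w _ => ?_
        have hmult : InfinitePlace.mult (Equiv.subtypeUnivEquiv htc w) = 2 := by
          rw [InfinitePlace.mult, if_neg (InfinitePlace.not_isReal_iff_isComplex.mpr (htc _))]
        rw [hmult]
        have : ‖relCanEmb K (x : K) w‖ = w.1 (x : K) := by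
          rw [relCanEmb, ← InfinitePlace.norm_embedding_eq]
        rw [this]
        rfl
      rw [h1, h2, one_mul]
      -- |Norm x| ≥ 1
      have hnz : Algebra.norm ℤ x ≠ 0 := by
        rw [Algebra.norm_ne_zero_iff]
        exact hx
      have : (1 : ℚ) ≤ |Algebra.norm ℚ (x : K)| := by
        rw [← Algebra.coe_norm_int]
        rw [show |((Algebra.norm ℤ x : ℤ) : ℚ)| = ((|Algebra.norm ℤ x| : ℤ) : ℚ) by
          push_cast; ring_nf]
        exact_mod_cast Int.one_le_abs hnz
      exact_mod_cast this
    -- AM-GM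
    have hgm := Real.geom_mean_le_arith_mean_weighted Finset.univ
      (fun _ => (k : ℝ)⁻¹) p (fun _ _ => by positivity)
      (by
        rw [Finset.sum_const, Finset.card_univ, hcard, nsmul_eq_mul,
          mul_inv_cancel₀ (ne_of_gt hkR)])
      (fun w _ => hp_nonneg w)
    have hrpow : ∏ w, p w ^ ((k : ℝ)⁻¹) = (∏ w, p w) ^ ((k : ℝ)⁻¹) :=
      (Real.finset_prod_rpow Finset.univ p (fun w _ => hp_nonneg w) _)
    have hge1 : (1 : ℝ) ≤ (∏ w, p w) ^ ((k : ℝ)⁻¹) := by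
      calc (1 : ℝ) = 1 ^ ((k : ℝ)⁻¹) := (Real.one_rpow _).symm
      _ ≤ (∏ w, p w) ^ ((k : ℝ)⁻¹) :=
        Real.rpow_le_rpow zero_le_one hprod (by positivity)
    have hsum : ∑ w, ((k : ℝ)⁻¹) * p w = (k : ℝ)⁻¹ * ∑ w, p w := by
      rw [Finset.mul_sum]
    have h1 : (1 : ℝ) ≤ (k : ℝ)⁻¹ * ∑ w, p w := by
      calc (1 : ℝ) ≤ (∏ w, p w) ^ ((k : ℝ)⁻¹) := hge1
      _ = ∏ w, p w ^ ((k : ℝ)⁻¹) := hrpow.symm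
      _ ≤ ∑ w, ((k : ℝ)⁻¹) * p w := hgm
      _ = (k : ℝ)⁻¹ * ∑ w, p w := hsum
    have : (k : ℝ) ≤ ∑ w, p w := by
      have := mul_le_mul_of_nonneg_left h1 (le_of_lt hkR)
      rwa [mul_one, ← mul_assoc, mul_inv_cancel₀ (ne_of_gt hkR), one_mul] at this
    exact this
  have hInf : sInf S = (k : ℝ) :=
    le_antisymm (csInf_le ⟨(k : ℝ), hlow⟩ hmem) (le_csInf ⟨_, hmem⟩ hlow)
  rw [hInf]
  -- the volume
  have hvol : (volume (ZSpan.fundamentalDomain B)).toReal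
      = (2 : ℝ)⁻¹ ^ k * Real.sqrt |(NumberField.discr K : ℝ)| := by
    rw [volume_fd K k htc b B hB,
      NumberField.mixedEmbedding.volume_fundamentalDomain_latticeBasis]
    rw [show NumberField.InfinitePlace.nrComplexPlaces K = k from hcard]
    rw [ENNReal.toReal_mul, ENNReal.toReal_pow, ENNReal.toReal_inv, ENNReal.toReal_ofNat,
      ENNReal.coe_toReal, Real.coe_sqrt, coe_nnnorm, Int.norm_eq_abs]
  rw [hvol]
  have hD : (0:ℝ) < |(NumberField.discr K : ℝ)| := by
    rw [abs_pos]
    exact_mod_cast NumberField.discr_ne_zero K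
  have hXpos : (0:ℝ) < |(NumberField.discr K : ℝ)| ^ ((1:ℝ)/(2 * k)) := Real.rpow_pos_of_pos hD _
  have hexp : ((2:ℝ)⁻¹ ^ k * Real.sqrt |(NumberField.discr K : ℝ)|) ^ ((1:ℝ)/k)
      = 2⁻¹ * |(NumberField.discr K : ℝ)| ^ ((1:ℝ)/(2 * k)) := by
    rw [Real.sqrt_eq_rpow, Real.mul_rpow (by positivity) (by positivity),
      ← Real.rpow_natCast (2⁻¹:ℝ) k, ← Real.rpow_mul (by norm_num),
      ← Real.rpow_mul hD.le]
    rw [show (k:ℝ) * ((1:ℝ)/k) = 1 by field_simp, Real.rpow_one]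
    congr 1
    rw [div_mul_div_comm, one_mul]
  rw [hexp]
  rw [div_eq_div_iff (by positivity) (by positivity)]
  ring
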